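/- arXiv:2209.04116 — 2 statements merged into one kernel-verified Lean document; each statement's English description precedes it below -/
import Mathlib

section
/- Let n ≥ 1, u, v_1,...,v_n ∈ S_N and w a word in the harmonic algebra H. Then (w,u) * (v_1,...,v_n) = (w,u,v_1,...,v_n) + (w,u+v_1,v_2,...,v_n) + Σ_{i=1}^{n} (-1)^{i-1} Σ_{•_k ∈ {comma,+}, 2≤k≤i} ({w * (v_i •_i ... •_2 v_1)}, u) * (v_{i+1},...,v_n), where (v_i •_i ... •_2 v_1) denotes the word formed from v_i,...,v_1 choosing at each step concatenation (comma) or addition in S_N (+), and the i=1 term is ({w*(v_1)},u)*(v_2,...,v_n). -/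
/- The harmonic (quasi-shuffle) algebra: H = ℚ⟨words over a commutative semigroup M⟩.
We represent the word (u₁,…,u_k) of the paper by a list; `hp` is the quasi-shuffle
recursion on the *last* letters, implemented on reversed lists, and `hpw` is the
paper's harmonic product of two words, `hmul` its ℚ-bilinear extension. -/

/-- Quasi-shuffle recursion, acting on reversed words (head = last letter). -/
noncomputable def hp {M : Type*} [AddCommSemigroup M] : List M → List M → (List M →₀ ℚ)
  | [], w => Finsupp.single w 1
  | u :: w1, [] => Finsupp.single (u :: w1) 1
  | u :: w1, v :: w2 =>
      Finsupp.mapDomain (u :: ·) (hp w1 (v :: w2)) +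
      Finsupp.mapDomain (v :: ·) (hp (u :: w1) w2) +
      Finsupp.mapDomain ((u + v) :: ·) (hp w1 w2)
  termination_by w1 w2 => w1.length + w2.length

/-- The harmonic product of two words (in natural order). -/
noncomputable def hpw {M : Type*} [AddCommSemigroup M] (w1 w2 : List M) : List M →₀ ℚ :=
  Finsupp.mapDomain List.reverse (hp w1.reverse w2.reverse)

/-- The harmonic product on H = ℚ⟨words⟩, the ℚ-bilinear extension of `hpw`. -/
noncomputable def hmul {M : Type*} [AddCommSemigroup M] (x y : List M →₀ ℚ) : List M →₀ ℚ :=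
  x.sum fun w1 c1 => y.sum fun w2 c2 => (c1 * c2) • hpw w1 w2

/-- All decompositions of a word into nonempty consecutive blocks. -/
def decomps {M : Type*} : List M → List (List (List M))
  | [] => [[]]
  | u :: t => (decomps t).flatMap fun d => match d with
      | [] => [[[u]]]
      | b :: rest => [[u] :: b :: rest, (u :: b) :: rest]

/-- The sum (in the semigroup) of the letters of a (nonempty) block. -/
def bsum {M : Type*} [AddCommSemigroup M] [Inhabited M] : List M → M
  | [] => default
  | a :: t => t.foldl (· + ·) a

/-- f(w) = Σ over block decompositions (β₁,…,β_k) of w of Rev(|β₁|,…,|β_k|). -/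
noncomputable def fword {M : Type*} [AddCommSemigroup M] [Inhabited M] (w : List M) :
    List M →₀ ℚ :=
  ((decomps w).map fun d => Finsupp.single ((d.map bsum).reverse) (1 : ℚ)).sum

/-- The antipode on words: S(w) = (-1)^{l(w)} f(w). -/
noncomputable def Sword {M : Type*} [AddCommSemigroup M] [Inhabited M] (w : List M) :
    List M →₀ ℚ :=
  ((-1 : ℚ) ^ w.length) • fword w


set_option linter.unusedSectionVars false

section
variable {M : Type*} [AddCommSemigroup M]
open Finsupp

variable {M : Type*} [AddCommSemigroup M]

lemma hp_nil_left (b : List M) : hp [] b = single b 1 := by rw [hp]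

lemma hp_nil_right (a : List M) : hp a [] = single a 1 := by
  cases a with
  | nil => rw [hp]
  | cons x t => rw [hp]

lemma hp_cons_cons (u v : M) (w1 w2 : List M) :
    hp (u :: w1) (v :: w2) =
      mapDomain (u :: ·) (hp w1 (v :: w2)) +
      mapDomain (v :: ·) (hp (u :: w1) w2) +
      mapDomain ((u + v) :: ·) (hp w1 w2) := by rw [hp]

lemma hmul_zero_left (y : List M →₀ ℚ) : hmul 0 y = 0 := by simp [hmul]

lemma hmul_zero_right (x : List M →₀ ℚ) : hmul x 0 = 0 := by simp [hmul]

lemma hmul_add_left (x x' y : List M →₀ ℚ) : hmul (x + x') y = hmul x y + hmul x' y := by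
  unfold hmul
  apply Finsupp.sum_add_index' <;> intros <;>
    simp [add_mul, add_smul, Finsupp.sum_add]

lemma hmul_add_right (x y y' : List M →₀ ℚ) : hmul x (y + y') = hmul x y + hmul x y' := by
  unfold hmul
  rw [← Finsupp.sum_add]
  apply Finsupp.sum_congr
  intro w1 _
  apply Finsupp.sum_add_index' <;> intros <;>
    simp [mul_add, add_smul]

lemma hmul_single_single (a b : List M) : hmul (single a (1:ℚ)) (single b 1) = hpw a b := by
  unfold hmul
  rw [Finsupp.sum_single_index, Finsupp.sum_single_index] <;> simp

lemma hmul_smul_left (c : ℚ) (x y : List M →₀ ℚ) : hmul (c • x) y = c • hmul x y := by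
  unfold hmul
  rw [Finsupp.smul_sum, Finsupp.sum_smul_index']
  · apply Finsupp.sum_congr
    intro w1 _
    rw [Finsupp.smul_sum]
    apply Finsupp.sum_congr
    intros; simp [smul_eq_mul, smul_smul, mul_assoc]
  · intro w1; simp

lemma hmul_smul_right (c : ℚ) (x y : List M →₀ ℚ) : hmul x (c • y) = c • hmul x y := by
  unfold hmul
  rw [Finsupp.smul_sum]
  apply Finsupp.sum_congr
  intro w1 _
  rw [Finsupp.smul_sum, Finsupp.sum_smul_index']
  · apply Finsupp.sum_congr
    intros; simp [smul_eq_mul, smul_smul]; ring_nf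
  · intro; simp

theorem hp_snoc (x z : M) (a b : List M) :
    hp (a ++ [x]) (b ++ [z]) =
      mapDomain (· ++ [x]) (hp a (b ++ [z])) +
      mapDomain (· ++ [z]) (hp (a ++ [x]) b) +
      mapDomain (· ++ [x + z]) (hp a b) := by
  match a, b with
  | [], [] =>
      simp only [List.nil_append, hp_nil_left, hp_nil_right, mapDomain_single]
      rw [hp_cons_cons]
      simp only [hp_nil_left, hp_nil_right, mapDomain_single, List.singleton_append]
      abel
  | [], y :: b' =>
      have h1 := hp_snoc x z [] b'
      simp only [List.nil_append, List.cons_append] at h1 ⊢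
      rw [hp_cons_cons, h1, hp_cons_cons x y [] b']
      simp only [hp_nil_left, mapDomain_add, mapDomain_single,
        ← mapDomain_comp, Function.comp_def, List.cons_append, List.append_assoc,
        List.singleton_append, List.nil_append]
      abel
  | u :: a', [] =>
      have h1 := hp_snoc x z a' []
      simp only [List.nil_append, List.cons_append] at h1 ⊢
      rw [hp_cons_cons, h1, hp_cons_cons u z a' []]
      simp only [hp_nil_left, hp_nil_right, mapDomain_add, mapDomain_single,
        ← mapDomain_comp, Function.comp_def, List.cons_append, List.append_assoc,
        List.singleton_append, List.nil_append]
      abel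
  | u :: a', y :: b' =>
      have h1 := hp_snoc x z a' (y :: b')
      have h2 := hp_snoc x z (u :: a') b'
      have h3 := hp_snoc x z a' b'
      simp only [List.nil_append, List.cons_append] at h1 h2 h3 ⊢
      rw [hp_cons_cons, h1, h2, h3,
        hp_cons_cons u y a' (b' ++ [z]), hp_cons_cons u y (a' ++ [x]) b',
        hp_cons_cons u y a' b']
      simp only [mapDomain_add, ← mapDomain_comp, Function.comp_def, List.cons_append]
      abel
  termination_by a.length + b.length

-- stage 3
lemma single_eq_smul_one (a : List M) (b : ℚ) :
    (single a b : List M →₀ ℚ) = b • single a 1 := by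
  rw [smul_single', mul_one]

lemma hpw_nil_left (b : List M) : hpw [] b = single b 1 := by
  simp [hpw, hp_nil_left]

lemma hpw_nil_right (a : List M) : hpw a [] = single a 1 := by
  simp [hpw, hp_nil_right]

lemma hpw_cons_cons (x z : M) (a c : List M) :
    hpw (x :: a) (z :: c) =
      mapDomain (x :: ·) (hpw a (z :: c)) +
      mapDomain (z :: ·) (hpw (x :: a) c) +
      mapDomain ((x + z) :: ·) (hpw a c) := by
  unfold hpw
  rw [List.reverse_cons, List.reverse_cons, hp_snoc]
  simp only [mapDomain_add, ← mapDomain_comp, Function.comp_def, List.reverse_append,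
    List.reverse_singleton, List.singleton_append, List.reverse_cons, List.reverse_nil,
    List.nil_append, List.cons_append, List.append_nil]

lemma hpw_snoc_snoc (x z : M) (a c : List M) :
    hpw (a ++ [x]) (c ++ [z]) =
      mapDomain (· ++ [x]) (hpw a (c ++ [z])) +
      mapDomain (· ++ [z]) (hpw (a ++ [x]) c) +
      mapDomain (· ++ [x + z]) (hpw a c) := by
  unfold hpw
  simp only [List.reverse_append, List.reverse_singleton, List.singleton_append]
  rw [hp_cons_cons]
  simp only [mapDomain_add, ← mapDomain_comp, Function.comp_def, List.reverse_cons,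
    List.reverse_append, List.reverse_singleton, List.singleton_append]

lemma hmul_one_right (x : List M →₀ ℚ) : hmul x (single [] 1) = x := by
  induction x using Finsupp.induction_linear with
  | zero => exact hmul_zero_left _
  | add f g hf hg => rw [hmul_add_left, hf, hg]
  | single a b =>
      rw [single_eq_smul_one a b, hmul_smul_left, hmul_single_single, hpw_nil_right,
        ← single_eq_smul_one]

lemma hmul_one_left (y : List M →₀ ℚ) : hmul (single [] 1) y = y := by
  induction y using Finsupp.induction_linear with
  | zero => exact hmul_zero_right _
  | add f g hf hg => rw [hmul_add_right, hf, hg]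
  | single a b =>
      rw [single_eq_smul_one a b, hmul_smul_right, hmul_single_single, hpw_nil_left,
        ← single_eq_smul_one]

lemma hmul_cons_left (x z : M) (X : List M →₀ ℚ) (c : List M) :
    hmul (mapDomain (x :: ·) X) (single (z :: c) 1) =
      mapDomain (x :: ·) (hmul X (single (z :: c) 1)) +
      mapDomain (z :: ·) (hmul (mapDomain (x :: ·) X) (single c 1)) +
      mapDomain ((x + z) :: ·) (hmul X (single c 1)) := by
  induction X using Finsupp.induction_linear with
  | zero => simp [hmul_zero_left]
  | add f g hf hg =>
      simp only [mapDomain_add, hmul_add_left, hf, hg]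
      abel
  | single a b =>
      rw [single_eq_smul_one a b]
      simp only [mapDomain_smul, hmul_smul_left, mapDomain_single, hmul_single_single]
      rw [hpw_cons_cons]
      simp only [smul_add]

lemma hmul_cons_right (x z : M) (a : List M) (Y : List M →₀ ℚ) :
    hmul (single (x :: a) 1) (mapDomain (z :: ·) Y) =
      mapDomain (x :: ·) (hmul (single a 1) (mapDomain (z :: ·) Y)) +
      mapDomain (z :: ·) (hmul (single (x :: a) 1) Y) +
      mapDomain ((x + z) :: ·) (hmul (single a 1) Y) := by
  induction Y using Finsupp.induction_linear with
  | zero => simp [hmul_zero_right]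
  | add f g hf hg =>
      simp only [mapDomain_add, hmul_add_right, hf, hg]
      abel
  | single m b =>
      rw [single_eq_smul_one m b]
      simp only [mapDomain_smul, hmul_smul_right, mapDomain_single, hmul_single_single]
      rw [hpw_cons_cons]
      simp only [smul_add]

lemma hmul_snoc (x z : M) (X : List M →₀ ℚ) (c : List M) :
    hmul (mapDomain (· ++ [x]) X) (single (c ++ [z]) 1) =
      mapDomain (· ++ [z]) (hmul (mapDomain (· ++ [x]) X) (single c 1)) +
      mapDomain (· ++ [x]) (hmul X (single (c ++ [z]) 1)) +
      mapDomain (· ++ [x + z]) (hmul X (single c 1)) := by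
  induction X using Finsupp.induction_linear with
  | zero => simp [hmul_zero_left]
  | add f g hf hg =>
      simp only [mapDomain_add, hmul_add_left, hf, hg]
      abel
  | single a b =>
      rw [single_eq_smul_one a b]
      simp only [mapDomain_smul, hmul_smul_left, mapDomain_single, hmul_single_single]
      rw [hpw_snoc_snoc]
      simp only [smul_add]
      abel

theorem hmul_assoc_sss (a b c : List M) :
    hmul (hpw a b) (single c 1) = hmul (single a (1:ℚ)) (hpw b c) := by
  match a, b, c with
  | [], b, c =>
      rw [hpw_nil_left, hmul_single_single, hmul_one_left]
  | x :: a', [], c =>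
      rw [hpw_nil_right, hpw_nil_left, hmul_single_single]
  | x :: a', y :: b', [] =>
      rw [hpw_nil_right, hmul_one_right, hmul_single_single]
  | x :: a', y :: b', z :: c' =>
      have i1 := hmul_assoc_sss a' (y :: b') (z :: c')
      have i2 := hmul_assoc_sss (x :: a') b' (z :: c')
      have i3 := hmul_assoc_sss a' b' (z :: c')
      have i4 := hmul_assoc_sss (x :: a') (y :: b') c'
      have i5 := hmul_assoc_sss a' (y :: b') c'
      have i6 := hmul_assoc_sss (x :: a') b' c'
      have i7 := hmul_assoc_sss a' b' c'
      have m1 := congrArg (mapDomain (x :: ·)) i1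
      have m2 := congrArg (mapDomain (y :: ·)) i2
      have m3 := congrArg (mapDomain ((x + y) :: ·)) i3
      have m5 := congrArg (mapDomain ((x + z) :: ·)) i5
      have m6 := congrArg (mapDomain ((y + z) :: ·)) i6
      have m7 := congrArg (mapDomain ((x + (y + z)) :: ·)) i7
      have mz : mapDomain (z :: ·) (hmul (mapDomain (x :: ·) (hpw a' (y :: b'))) (single c' 1)) +
            mapDomain (z :: ·) (hmul (mapDomain (y :: ·) (hpw (x :: a') b')) (single c' 1)) +
            mapDomain (z :: ·) (hmul (mapDomain ((x + y) :: ·) (hpw a' b')) (single c' 1)) =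
          mapDomain (z :: ·) (hmul (single (x :: a') 1) (hpw (y :: b') c')) := by
        rw [← mapDomain_add, ← mapDomain_add, ← hmul_add_left, ← hmul_add_left,
          ← hpw_cons_cons, i4]
      have mx : mapDomain (x :: ·) (hmul (single a' 1) (mapDomain (y :: ·) (hpw b' (z :: c')))) +
            mapDomain (x :: ·) (hmul (single a' 1) (mapDomain (z :: ·) (hpw (y :: b') c'))) +
            mapDomain (x :: ·) (hmul (single a' 1) (mapDomain ((y + z) :: ·) (hpw b' c'))) =
          mapDomain (x :: ·) (hmul (single a' 1) (hpw (y :: b') (z :: c'))) := by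
        rw [← mapDomain_add, ← mapDomain_add, ← hmul_add_right, ← hmul_add_right,
          ← hpw_cons_cons]
      rw [hpw_cons_cons x y a' b', hmul_add_left, hmul_add_left,
        hmul_cons_left, hmul_cons_left, hmul_cons_left,
        hpw_cons_cons y z b' c', hmul_add_right, hmul_add_right,
        hmul_cons_right, hmul_cons_right, hmul_cons_right]
      simp only [add_assoc]
      linear_combination (norm := abel) m1 + m2 + m3 + mz + m5 + m6 + m7 - mx
  termination_by a.length + b.length + c.length

theorem hmul_assoc (x y z : List M →₀ ℚ) :
    hmul (hmul x y) z = hmul x (hmul y z) := by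
  induction x using Finsupp.induction_linear with
  | zero => simp [hmul_zero_left]
  | add f g hf hg => rw [hmul_add_left, hmul_add_left, hmul_add_left, hf, hg]
  | single a ca =>
    rw [single_eq_smul_one a ca, hmul_smul_left, hmul_smul_left, hmul_smul_left]
    congr 1
    induction y using Finsupp.induction_linear with
    | zero => simp [hmul_zero_left, hmul_zero_right]
    | add f g hf hg => rw [hmul_add_right, hmul_add_left, hmul_add_left, hmul_add_right, hf, hg]
    | single b cb =>
      rw [single_eq_smul_one b cb, hmul_smul_right, hmul_smul_left, hmul_smul_left,
        hmul_smul_right]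
      congr 1
      induction z using Finsupp.induction_linear with
      | zero => simp [hmul_zero_right]
      | add f g hf hg => rw [hmul_add_right, hmul_add_right, hmul_add_right, hf, hg]
      | single c cc =>
        rw [single_eq_smul_one c cc, hmul_smul_right, hmul_smul_right, hmul_smul_right]
        congr 1
        rw [hmul_single_single, hmul_single_single b c, hmul_assoc_sss]

end

section
variable {α : Type*}

def chead (a : α) : List (List α) → List (List α)
  | [] => [[a]]
  | b :: rest => (a :: b) :: rest

def jlast (y : α) : List (List α) → List (List α)
  | [] => [[y]]
  | [b] => [b ++ [y]]
  | b :: c :: d => b :: jlast y (c :: d)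

lemma decomps_cons (a : α) (t : List α) :
    decomps (a :: t) = (decomps t).flatMap fun d => match d with
      | [] => [[[a]]]
      | b :: rest => [[a] :: b :: rest, (a :: b) :: rest] := by rw [decomps]

lemma flatMap_congr_left {β : Type*} {l : List α} {f g : α → List β}
    (h : ∀ a ∈ l, f a = g a) : l.flatMap f = l.flatMap g := by
  induction l with
  | nil => rfl
  | cons a t ih =>
      simp only [List.flatMap_cons, h a (by simp)]
      rw [ih (fun a ha => h a (by simp [ha]))]

lemma mem_decomps_ne_nil {p : List α} (hp : p ≠ []) {d : List (List α)}
    (hd : d ∈ decomps p) : d ≠ [] := by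
  cases p with
  | nil => exact absurd rfl hp
  | cons a t =>
      rw [decomps_cons, List.mem_flatMap] at hd
      obtain ⟨d', _, hmem⟩ := hd
      cases d' with
      | nil => simp at hmem; simp [hmem]
      | cons b rest =>
          simp only [List.mem_cons, List.not_mem_nil, or_false] at hmem
          rcases hmem with h | h <;> simp [h]

lemma mem_decomps_blocks {p : List α} {d : List (List α)} (hd : d ∈ decomps p)
    {b : List α} (hb : b ∈ d) : b ≠ [] := by
  induction p generalizing d with
  | nil => simp [decomps] at hd; subst hd; simp at hb
  | cons a t ih =>
      rw [decomps_cons, List.mem_flatMap] at hd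
      obtain ⟨d', hd', hmem⟩ := hd
      cases d' with
      | nil =>
          simp at hmem; subst hmem
          simp at hb; simp [hb]
      | cons b' rest =>
          simp only [List.mem_cons, List.not_mem_nil, or_false] at hmem
          rcases hmem with h | h
          · subst h
            rcases List.mem_cons.1 hb with h' | h'
            · simp [h']
            · exact ih hd' h'
          · subst h
            rcases List.mem_cons.1 hb with h' | h'
            · simp [h']
            · exact ih hd' (List.mem_cons_of_mem _ h')

lemma decomps_cons_ne (a : α) {t : List α} (ht : t ≠ []) :
    decomps (a :: t) = (decomps t).flatMap (fun d => [[a] :: d, chead a d]) := by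
  rw [decomps_cons]
  apply flatMap_congr_left
  intro d hd
  have := mem_decomps_ne_nil ht hd
  cases d with
  | nil => exact absurd rfl this
  | cons b rest => rfl

lemma chead_jlast (a : α) (y : α) {d : List (List α)} (hd : d ≠ []) :
    chead a (jlast y d) = jlast y (chead a d) := by
  cases d with
  | nil => exact absurd rfl hd
  | cons b rest => cases rest <;> rfl

lemma cons_jlast (a : List α) (y : α) {d : List (List α)} (hd : d ≠ []) :
    a :: jlast y d = jlast y (a :: d) := by
  cases d with
  | nil => exact absurd rfl hd
  | cons b rest => cases rest <;> rfl

lemma sum_flatMap_map {β γ : Type*} [AddCommMonoid γ] (l : List α) (f : α → List β)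
    (g : β → γ) : ((l.flatMap f).map g).sum = (l.map (fun a => ((f a).map g).sum)).sum := by
  induction l with
  | nil => simp
  | cons a t ih => simp [ih]

lemma sum_decomps_snoc {γ : Type*} [AddCommMonoid γ] (y : α) (g : List (List α) → γ) :
    ∀ (p : List α), p ≠ [] →
    ((decomps (p ++ [y])).map g).sum =
      ((decomps p).map (fun d => g (d ++ [[y]]) + g (jlast y d))).sum
  | [], hp => absurd rfl hp
  | [a], _ => by
      show ((decomps (a :: [y])).map g).sum = _
      rw [decomps_cons_ne a (by simp : ([y]:List α) ≠ [])]
      simp [decomps, jlast, chead]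
  | a :: b :: p', _ => by
      have hne : (b :: p') ≠ [] := by simp
      have hne' : (b :: p') ++ [y] ≠ [] := by simp
      rw [List.cons_append, decomps_cons_ne a hne', decomps_cons_ne a hne,
        sum_flatMap_map, sum_flatMap_map]
      have e1 : ∀ d ∈ decomps ((b :: p') ++ [y]),
          (([[a] :: d, chead a d]).map g).sum = g ([a] :: d) + g (chead a d) := by
        intro d _; simp
      rw [List.map_congr_left e1,
        sum_decomps_snoc y (fun d => g ([a] :: d) + g (chead a d)) (b :: p') hne]
      apply congrArg
      apply List.map_congr_left
      intro d hd
      have hdne : d ≠ [] := mem_decomps_ne_nil hne hd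
      have h1 : [a] :: jlast y d = jlast y ([a] :: d) := cons_jlast _ y hdne
      have h2 : chead a (jlast y d) = jlast y (chead a d) := chead_jlast a y hdne
      cases d with
      | nil => exact absurd rfl hdne
      | cons b' rest' =>
          simp only [chead, List.cons_append] at h1 h2 ⊢
          rw [h1, h2]
          simp only [List.map_cons, List.map_nil, List.sum_cons, List.sum_nil, add_zero,
            List.cons_append]
          abel

end

section
variable {M : Type*} [AddCommSemigroup M] [Inhabited M]

def haddHead (y : M) : List M → List M
  | [] => [y]
  | h :: t => (h + y) :: t

lemma bsum_singleton (y : M) : bsum [y] = y := rfl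

lemma bsum_snoc {b : List M} (hb : b ≠ []) (y : M) : bsum (b ++ [y]) = bsum b + y := by
  cases b with
  | nil => exact absurd rfl hb
  | cons a t => simp [bsum, List.foldl_append]

lemma haddHead_append {l : List M} (hl : l ≠ []) (y : M) (m : List M) :
    haddHead y (l ++ m) = haddHead y l ++ m := by
  cases l with
  | nil => exact absurd rfl hl
  | cons h t => rfl

lemma map_bsum_reverse_snoc (d : List (List M)) (y : M) :
    (((d ++ [[y]]).map bsum).reverse : List M) = y :: (d.map bsum).reverse := by
  simp [bsum_singleton]

lemma map_bsum_reverse_jlast {d : List (List M)} (y : M) (hd : d ≠ [])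
    (hb : ∀ b ∈ d, b ≠ []) :
    ((jlast y d).map bsum).reverse = haddHead y ((d.map bsum).reverse) := by
  induction d with
  | nil => exact absurd rfl hd
  | cons b rest ih =>
      cases rest with
      | nil =>
          simp only [jlast, List.map_cons, List.map_nil, List.reverse_cons, List.reverse_nil,
            List.nil_append]
          rw [bsum_snoc (hb b (by simp)) y]
          rfl
      | cons c rest' =>
          have hj : jlast y (b :: c :: rest') = b :: jlast y (c :: rest') := rfl
          have ihe := ih (by simp) (fun b' hb' => hb b' (List.mem_cons_of_mem _ hb'))
          rw [hj]
          simp only [List.map_cons, List.reverse_cons]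
          rw [ihe]
          simp only [List.map_cons, List.reverse_cons]
          rw [haddHead_append (by simp) y [bsum b]]
end

section
variable {M : Type*} [AddCommSemigroup M] [Inhabited M]
open Finsupp

lemma list_sum_add {ι : Type*} (l : List ι) (f g : ι → (List M →₀ ℚ)) :
    (l.map f).sum + (l.map g).sum = (l.map fun d => f d + g d).sum := by
  induction l with
  | nil => simp
  | cons a t ih => simp only [List.map_cons, List.sum_cons, ← ih]; abel

lemma hmul_listsum_left {ι : Type*} (l : List ι) (f : ι → (List M →₀ ℚ)) (y : List M →₀ ℚ) :
    hmul (l.map f).sum y = (l.map fun d => hmul (f d) y).sum := by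
  induction l with
  | nil => simp [hmul_zero_left]
  | cons a t ih => simp [hmul_add_left, ih]

lemma hmul_listsum_right {ι : Type*} (x : List M →₀ ℚ) (l : List ι) (f : ι → (List M →₀ ℚ)) :
    hmul x (l.map f).sum = (l.map fun d => hmul x (f d)).sum := by
  induction l with
  | nil => simp [hmul_zero_right]
  | cons a t ih => simp [hmul_add_right, ih]

lemma mapDomain_listsum {ι : Type*} (F : List M → List M) (l : List ι)
    (f : ι → (List M →₀ ℚ)) :
    mapDomain F (l.map f).sum = (l.map fun d => mapDomain F (f d)).sum := by
  induction l with
  | nil => simp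
  | cons a t ih => simp [mapDomain_add, ih]

lemma hmul_finsetsum_right {ι : Type*} (x : List M →₀ ℚ) (s : Finset ι)
    (f : ι → (List M →₀ ℚ)) :
    hmul x (∑ i ∈ s, f i) = ∑ i ∈ s, hmul x (f i) := by
  induction s using Finset.cons_induction with
  | empty => simp [hmul_zero_right]
  | cons a s ha ih => rw [Finset.sum_cons, hmul_add_right, ih, Finset.sum_cons]

lemma mapDomain_finsetsum {ι : Type*} (F : List M → List M) (s : Finset ι)
    (f : ι → (List M →₀ ℚ)) :
    mapDomain F (∑ i ∈ s, f i) = ∑ i ∈ s, mapDomain F (f i) := by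
  induction s using Finset.cons_induction with
  | empty => simp
  | cons a s ha ih => rw [Finset.sum_cons, mapDomain_add, ih, Finset.sum_cons]

lemma headI_cons_tail {l : List M} (h : l ≠ []) : l.headI :: l.tail = l := by
  cases l with
  | nil => exact absurd rfl h
  | cons a t => rfl

lemma take_ne_nil {V : List M} {i : ℕ} (h1 : 1 ≤ i) (h2 : i ≤ V.length) :
    V.take i ≠ [] := by
  apply List.ne_nil_of_length_pos
  rw [List.length_take]
  omega

lemma bd_ne_nil {p : List M} (hp : p ≠ []) {d : List (List M)} (hd : d ∈ decomps p) :
    ((d.map bsum).reverse : List M) ≠ [] := by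
  have := mem_decomps_ne_nil hp hd
  simp [this]

noncomputable def Dt (V : List M) (i : ℕ) : List M →₀ ℚ :=
  ((decomps (V.take i)).map fun d =>
    mapDomain (((d.map bsum).reverse).headI :: ·)
      (hmul (single (((d.map bsum).reverse : List M)).tail 1) (single (V.drop i) 1))).sum

noncomputable def Ct (V : List M) (i : ℕ) : List M →₀ ℚ :=
  mapDomain ((V.drop i).headI :: ·) (hmul (fword (V.take i)) (single (V.drop (i+1)) 1))

noncomputable def Et (V : List M) (i : ℕ) : List M →₀ ℚ :=
  ((decomps (V.take i)).map fun d =>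
    mapDomain ((((d.map bsum).reverse : List M).headI + (V.drop i).headI) :: ·)
      (hmul (single (((d.map bsum).reverse : List M)).tail 1) (single (V.drop (i+1)) 1))).sum

lemma F1 (V : List M) (i : ℕ) (h1 : 1 ≤ i) (h2 : i < V.length) :
    hmul (fword (V.take i)) (single (V.drop i) 1) = Dt V i + Ct V i + Et V i := by
  have htake : V.take i ≠ [] := take_ne_nil h1 (le_of_lt h2)
  have hdropc : V.drop i = (V.drop i).headI :: V.drop (i+1) := by
    rw [List.drop_eq_getElem_cons h2]
    rfl
  rw [fword, hmul_listsum_left, Dt, Ct, fword, hmul_listsum_left,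
    mapDomain_listsum, Et, list_sum_add, list_sum_add]
  apply congrArg
  apply List.map_congr_left
  intro d hd
  have hB : ((d.map bsum).reverse : List M) ≠ [] := bd_ne_nil htake hd
  set B := ((d.map bsum).reverse : List M) with hBdef
  have hBc : B = B.headI :: B.tail := (headI_cons_tail hB).symm
  conv_lhs => rw [hBc, hdropc]
  rw [hmul_single_single, hpw_cons_cons, ← hmul_single_single, ← hmul_single_single,
    ← hmul_single_single, ← hBc, ← hdropc]

lemma F2 (V : List M) (hV : V ≠ []) : Dt V V.length = fword V := by
  rw [Dt, List.take_length, List.drop_length, fword]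
  apply congrArg
  apply List.map_congr_left
  intro d hd
  have hB : ((d.map bsum).reverse : List M) ≠ [] := bd_ne_nil hV hd
  rw [hmul_one_right, mapDomain_single, headI_cons_tail hB]

lemma F3 (V : List M) (i : ℕ) (h1 : 1 ≤ i) (h2 : i < V.length) :
    Dt V (i+1) = Ct V i + Et V i := by
  have htake : V.take i ≠ [] := take_ne_nil h1 (le_of_lt h2)
  have htak : V.take (i+1) = V.take i ++ [V[i]] := by
    rw [List.take_succ]
    simp [List.getElem?_eq_getElem h2]
  have hx : (V.drop i).headI = V[i] := by
    rw [List.drop_eq_getElem_cons h2]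
    rfl
  rw [Dt, htak, sum_decomps_snoc, Ct, fword, hmul_listsum_left, mapDomain_listsum, Et,
    list_sum_add]
  case a => exact htake
  apply congrArg
  apply List.map_congr_left
  intro d hd
  have hdne : d ≠ [] := mem_decomps_ne_nil htake hd
  have hblocks : ∀ b ∈ d, b ≠ [] := fun b hb => mem_decomps_blocks hd hb
  have hB : ((d.map bsum).reverse : List M) ≠ [] := bd_ne_nil htake hd
  rw [map_bsum_reverse_snoc, map_bsum_reverse_jlast V[i] hdne hblocks]
  set B := ((d.map bsum).reverse : List M) with hBdef
  have hBc : B = B.headI :: B.tail := (headI_cons_tail hB).symm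
  have hadd : haddHead V[i] B = (B.headI + V[i]) :: B.tail := by
    rw [hBc]; rfl
  rw [hadd]
  simp only [List.headI_cons, List.tail_cons, hx]

lemma F4 (V : List M) (hV : V ≠ []) : Dt V 1 = single V 1 := by
  cases V with
  | nil => exact absurd rfl hV
  | cons a t =>
      rw [Dt]
      have h1 : (a :: t).take 1 = [a] := rfl
      have h2 : decomps ([a] : List M) = [[[a]]] := by simp [decomps]
      rw [h1, h2]
      simp only [List.map_cons, List.map_nil, List.sum_cons, List.sum_nil, add_zero]
      simp only [List.map_cons, List.map_nil, List.reverse_cons, List.reverse_nil,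
        List.nil_append, bsum_singleton, List.headI_cons, List.tail_cons,
        List.drop_succ_cons, List.drop_zero, hmul_one_left, mapDomain_single]

theorem lemI_aux (V : List M) (hV : V ≠ []) (k : ℕ) (hk1 : 1 ≤ k) (hk2 : k ≤ V.length) :
    ∑ i ∈ Finset.Icc k V.length,
      ((-1:ℚ)^(i-k)) • hmul (fword (V.take i)) (single (V.drop i) 1) = Dt V k := by
  rcases eq_or_lt_of_le hk2 with heq | hlt
  · subst heq
    rw [Finset.Icc_self, Finset.sum_singleton, Nat.sub_self, pow_zero, one_smul,
      List.take_length, List.drop_length, hmul_one_right, F2 V hV]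
  · have hins : Finset.Icc k V.length = insert k (Finset.Icc (k+1) V.length) := by
      ext j
      simp only [Finset.mem_Icc, Finset.mem_insert]
      omega
    rw [hins, Finset.sum_insert (by simp)]
    have hsign : ∀ i ∈ Finset.Icc (k+1) V.length,
        ((-1:ℚ)^(i-k)) • hmul (fword (V.take i)) (single (V.drop i) 1) =
        -(((-1:ℚ)^(i-(k+1))) • hmul (fword (V.take i)) (single (V.drop i) 1)) := by
      intro i hi
      rw [Finset.mem_Icc] at hi
      rw [show i - k = (i - (k+1)) + 1 by omega, pow_succ]
      rw [mul_comm, neg_one_mul, neg_smul]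
    rw [Finset.sum_congr rfl hsign, Finset.sum_neg_distrib,
      lemI_aux V hV (k+1) (by omega) hlt,
      Nat.sub_self, pow_zero, one_smul, F1 V k hk1 hlt, F3 V k hk1 hlt]
    abel
  termination_by V.length - k

theorem lemI (V : List M) (hV : V ≠ []) :
    ∑ i ∈ Finset.Icc 1 V.length,
      ((-1:ℚ)^(i-1)) • hmul (fword (V.take i)) (single (V.drop i) 1) = single V 1 := by
  rw [lemI_aux V hV 1 le_rfl (List.length_pos_iff.mpr hV), F4 V hV]

end


section
variable {M : Type*} [AddCommSemigroup M] [Inhabited M]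
open Finsupp

lemma headI_append {l : List M} (hl : l ≠ []) (m : List M) : (l ++ m).headI = l.headI := by
  cases l with
  | nil => exact absurd rfl hl
  | cons a t => rfl

lemma tail_append {l : List M} (hl : l ≠ []) (m : List M) : (l ++ m).tail = l.tail ++ m := by
  cases l with
  | nil => exact absurd rfl hl
  | cons a t => rfl

set_option maxHeartbeats 1000000 in
theorem main' (u : M) (w : List M) : ∀ (V : List M), V ≠ [] →
    hmul (single (w ++ [u]) (1:ℚ)) (single V 1) =
      single (w ++ u :: V) 1 + single (w ++ (u + V.headI) :: V.tail) 1 +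
      ∑ i ∈ Finset.Icc 1 V.length, ((-1:ℚ)^(i-1)) •
        hmul (mapDomain (· ++ [u]) (hmul (single w 1) (fword (V.take i))))
          (single (V.drop i) 1) := by
  intro V
  induction V using List.reverseRecOn with
  | nil => intro h; exact absurd rfl h
  | append_singleton l z ih =>
    intro _
    rcases eq_or_ne l [] with hl | hl
    · subst hl
      simp only [List.nil_append]
      have hsnoc := hmul_snoc u z (single w (1:ℚ)) []
      simp only [List.nil_append, mapDomain_single, hmul_one_right] at hsnoc
      rw [hsnoc]
      have hfz : fword [z] = single ([z] : List M) 1 := by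
        simp [fword, decomps, bsum_singleton]
      have hlen1 : ([z] : List M).length = 1 := rfl
      rw [hlen1, Finset.Icc_self, Finset.sum_singleton]
      norm_num
      rw [hfz, hmul_one_right]
      abel
    · have ihl := ih hl
      have hlen : (l ++ [z]).length = l.length + 1 := by simp
      have hheadI : (l ++ [z]).headI = l.headI := headI_append hl [z]
      have htail : (l ++ [z]).tail = l.tail ++ [z] := tail_append hl [z]
      have htakeT : (l ++ [z]).take (l.length + 1) = l ++ [z] := by
        rw [← hlen, List.take_length]
      have hdropT : (l ++ [z]).drop (l.length + 1) = [] := by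
        rw [← hlen, List.drop_length]
      -- LHS expansion
      have hsnoc := hmul_snoc u z (single w (1:ℚ)) l
      simp only [mapDomain_single] at hsnoc
      rw [hsnoc, ihl, mapDomain_add, mapDomain_add, mapDomain_finsetsum]
      simp only [mapDomain_smul, mapDomain_single]
      -- RHS expansion
      rw [hlen, Finset.sum_Icc_succ_top (by omega : 1 ≤ l.length + 1), htakeT, hdropT,
        hmul_one_right]
      have hterm : ∀ i ∈ Finset.Icc 1 l.length,
          ((-1:ℚ)^(i-1)) • hmul (mapDomain (· ++ [u])
              (hmul (single w 1) (fword ((l ++ [z]).take i)))) (single ((l ++ [z]).drop i) 1)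
          = ((-1:ℚ)^(i-1)) •
            (mapDomain (· ++ [z]) (hmul (mapDomain (· ++ [u])
                (hmul (single w 1) (fword (l.take i)))) (single (l.drop i) 1)) +
             mapDomain (· ++ [u]) (hmul (hmul (single w 1) (fword (l.take i)))
                (single (l.drop i ++ [z]) 1)) +
             mapDomain (· ++ [u + z]) (hmul (hmul (single w 1) (fword (l.take i)))
                (single (l.drop i) 1))) := by
        intro i hi
        rw [Finset.mem_Icc] at hi
        rw [List.take_append_of_le_length (by omega), List.drop_append_of_le_length (by omega),
          hmul_snoc]
      rw [Finset.sum_congr rfl hterm]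
      simp only [smul_add]
      rw [Finset.sum_add_distrib, Finset.sum_add_distrib]
      -- key identities
      have hIlz := lemI (l ++ [z]) (by simp)
      have hA := congrArg (fun t => mapDomain (· ++ [u]) (hmul (single w (1:ℚ)) t)) hIlz
      rw [hmul_finsetsum_right, mapDomain_finsetsum] at hA
      simp only [hmul_smul_right, mapDomain_smul] at hA
      rw [hlen, Finset.sum_Icc_succ_top (by omega : 1 ≤ l.length + 1), htakeT, hdropT,
        hmul_one_right, Nat.add_sub_cancel] at hA
      have hbodyA : ∀ i ∈ Finset.Icc 1 l.length,
          ((-1:ℚ)^(i-1)) • mapDomain (· ++ [u]) (hmul (single w 1)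
            (hmul (fword ((l ++ [z]).take i)) (single ((l ++ [z]).drop i) 1)))
          = ((-1:ℚ)^(i-1)) • mapDomain (· ++ [u]) (hmul (hmul (single w 1) (fword (l.take i)))
            (single (l.drop i ++ [z]) 1)) := by
        intro i hi
        rw [Finset.mem_Icc] at hi
        rw [List.take_append_of_le_length (by omega), List.drop_append_of_le_length (by omega),
          hmul_assoc]
      rw [Finset.sum_congr rfl hbodyA] at hA
      have hIl := lemI l hl
      have hB := congrArg (fun t => mapDomain (· ++ [u + z]) (hmul (single w (1:ℚ)) t)) hIl
      rw [hmul_finsetsum_right, mapDomain_finsetsum] at hB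
      simp only [hmul_smul_right, mapDomain_smul] at hB
      have hbodyB : ∀ i ∈ Finset.Icc 1 l.length,
          ((-1:ℚ)^(i-1)) • mapDomain (· ++ [u + z]) (hmul (single w 1)
            (hmul (fword (l.take i)) (single (l.drop i) 1)))
          = ((-1:ℚ)^(i-1)) • mapDomain (· ++ [u + z]) (hmul (hmul (single w 1) (fword (l.take i)))
            (single (l.drop i) 1)) := by
        intro i hi
        rw [hmul_assoc]
      rw [Finset.sum_congr rfl hbodyB] at hB
      rw [hheadI, htail]
      simp only [List.append_assoc, List.cons_append, List.nil_append, Nat.add_sub_cancel]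
      linear_combination (norm := abel) -hA - hB
end

section
variable {M : Type*} [AddCommSemigroup M] [Inhabited M]
open Finsupp

lemma hlist_aux (u : M) (w : List M) (P T : List M) :
    ((decomps P).map fun d =>
      hmul (mapDomain (fun lq => lq ++ [u]) (hmul (single w (1:ℚ))
        (single ((d.map bsum).reverse) 1))) (single T 1)).sum =
    hmul (mapDomain (· ++ [u]) (hmul (single w (1:ℚ)) (fword P))) (single T 1) := by
  rw [fword, hmul_listsum_right, mapDomain_listsum, hmul_listsum_left]

end


/-- for a word w, letters u, v₁,…,v_n,
(w,u)*(v₁,…,v_n) = (w,u,v₁,…,v_n) + (w,u+v₁,v₂,…,v_n)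
 + Σ_{i=1}^{n} (-1)^{i-1} Σ_{•} ({w*(v_i •_i ⋯ •_2 v₁)},u) * (v_{i+1},…,v_n),
where the bullet sum runs over block decompositions d of (v₁,…,v_i) and
({x},u) is the linear extension of appending the letter u. -/
theorem harmonic_expansion {M : Type*} [AddCommSemigroup M] [Inhabited M]
    (n : ℕ) (hn : 1 ≤ n) (u : M) (v : Fin n → M) (w : List M) :
    hmul (Finsupp.single (w ++ [u]) (1 : ℚ)) (Finsupp.single (List.ofFn v) 1) =
      Finsupp.single (w ++ u :: List.ofFn v) 1 +
      Finsupp.single (w ++ (u + v ⟨0, hn⟩) :: (List.ofFn v).drop 1) 1 +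
      ∑ i ∈ Finset.Icc 1 n, ((-1 : ℚ) ^ (i - 1)) •
        ((decomps ((List.ofFn v).take i)).map fun d =>
          hmul
            (Finsupp.mapDomain (fun l => l ++ [u])
              (hmul (Finsupp.single w (1 : ℚ))
                (Finsupp.single ((d.map bsum).reverse) 1)))
            (Finsupp.single ((List.ofFn v).drop i) 1)).sum := by
  have hlen : (List.ofFn v).length = n := List.length_ofFn
  have hV : List.ofFn v ≠ [] := by
    intro h
    rw [h] at hlen
    simp at hlen
    omega
  have hhead : (List.ofFn v).headI = v ⟨0, hn⟩ := by
    obtain ⟨m, rfl⟩ : ∃ m, n = m + 1 := ⟨n - 1, by omega⟩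
    rw [List.ofFn_succ]
    rfl
  rw [main' u w (List.ofFn v) hV, hhead, hlen, List.drop_one]
  congr 1
  apply Finset.sum_congr rfl
  intro i _
  rw [← hlist_aux u w ((List.ofFn v).take i) ((List.ofFn v).drop i)]
end

section
/- Let n_1, n_2 ≤ 0 be integers with n_1 n_2 ≠ 0 such that n_1+n_2 is a negative odd integer (so (n_1,n_2) is a regular point of ζ_2). Then ζ_2(n_1, n_2) = -(1/2) ζ(n_1+n_2) = B_{-n_1-n_2+1} / (2(-n_1-n_2+1)). -/
open Complex

/-- The Euler–Zagier multiple zeta series Σ_{0<n₁<⋯<n_r} n₁^{-s₁}⋯n_r^{-s_r},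
for a list s = [s₁,…,s_r] of complex exponents. -/
noncomputable def mzSeries (s : List ℂ) : ℂ :=
  ∑' n : Fin s.length → ℕ,
    if (∀ i, 0 < n i) ∧ (∀ i j : Fin s.length, i < j → n i < n j) then
      ∏ i, (n i : ℂ) ^ (-(s.get i)) else 0

/-- The sum of the last k entries of s. -/
noncomputable def lastSum (s : List ℂ) (k : ℕ) : ℂ := (s.drop (s.length - k)).sum

/-- The domain of absolute convergence: Re(s_{r-k+1}+⋯+s_r) > k for k = 1,…,r. -/
def convDom (s : List ℂ) : Prop :=
  ∀ k, 1 ≤ k → k ≤ s.length → (k : ℝ) < (lastSum s k).re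

/-- (s₁,…,s_r) is a regular (non-singular) point of ζ_r: s_r ≠ 1,
s_{r-1}+s_r ∉ {2,1,0,-2,-4,…}, and s_{r-k+1}+⋯+s_r ∉ ℤ_{≤k} for k = 3,…,r. -/
def MZRegular (s : List ℂ) : Prop :=
  (1 ≤ s.length → lastSum s 1 ≠ 1) ∧
  (2 ≤ s.length → ¬(lastSum s 2 = 2 ∨ lastSum s 2 = 1 ∨ lastSum s 2 = 0 ∨
      ∃ m : ℕ, lastSum s 2 = -(2 * ((m : ℂ) + 1)))) ∧
  (∀ k, 3 ≤ k → k ≤ s.length → ¬∃ m : ℤ, (m : ℂ) = lastSum s k ∧ m ≤ (k : ℤ))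

/-- `Z` is the meromorphic continuation of the family of Euler–Zagier multiple
zeta-functions of all depths: it agrees with the series on the domain of absolute
convergence and is analytic at every regular point. -/
structure IsMZFFamily (Z : List ℂ → ℂ) : Prop where
  series_eq : ∀ s : List ℂ, convDom s → Z s = mzSeries s
  analytic : ∀ r : ℕ, AnalyticOnNhd ℂ (fun v : Fin r → ℂ => Z (List.ofFn v))
    {v : Fin r → ℂ | MZRegular (List.ofFn v)}

/-- ζ(-k) = -B_{k+1}/(k+1); `Bdiv k` is B_{k+1}/(k+1) as a complex number. -/
noncomputable def Bdiv (k : ℕ) : ℂ := ((bernoulli (k + 1) : ℚ) : ℂ) / ((k : ℂ) + 1)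

/-- Riemann zeta at an integer argument. -/
noncomputable def zetaInt (m : ℤ) : ℂ := riemannZeta ((m : ℤ) : ℂ)

lemma mzSeries_two (c₁ c₂ : ℂ) :
    mzSeries [c₁, c₂] =
      ∑' p : ℕ × ℕ, (if p.2 < p.1 ∧ 0 < p.2 then (p.2:ℂ)^(-c₁) * (p.1:ℂ)^(-c₂) else 0) := by
  show (∑' n : Fin 2 → ℕ,
    if (∀ i, 0 < n i) ∧ (∀ i j : Fin 2, i < j → n i < n j) then
      ∏ i, (n i : ℂ) ^ (-(([c₁,c₂] : List ℂ).get i)) else 0) = _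
  rw [← ((Equiv.prodComm ℕ ℕ).trans (piFinTwoEquiv (fun _ => ℕ)).symm).tsum_eq]
  congr 1; funext p
  have h0 : ((Equiv.prodComm ℕ ℕ).trans (piFinTwoEquiv (fun _ => ℕ)).symm) p
      = ![p.2, p.1] := rfl
  rw [h0]
  by_cases h : p.2 < p.1 ∧ 0 < p.2
  · rw [if_pos ?_, if_pos h, Fin.prod_univ_two]
    · rfl
    · refine ⟨?_, ?_⟩
      · intro i; fin_cases i <;> simp <;> omega
      · intro i j hij; fin_cases i <;> fin_cases j <;> simp_all
  · rw [if_neg ?_, if_neg h]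
    rintro ⟨h1, h2⟩
    exact h ⟨h2 0 1 (by norm_num), h1 0⟩
noncomputable def coefC (a i : ℕ) : ℂ :=
  ((bernoulli i * ((a+1).choose i) / ((a:ℚ)+1) : ℚ) : ℂ)

lemma faulhaberC (a n : ℕ) : (∑ m ∈ Finset.range n, (m:ℂ)^a)
    = ∑ i ∈ Finset.range (a+1), coefC a i * (n:ℂ)^(a+1-i) := by
  have h := congrArg (Rat.cast (K := ℂ)) (sum_range_pow n a)
  push_cast at h
  rw [h]
  refine Finset.sum_congr rfl fun i hi => ?_
  simp only [coefC]
  push_cast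
  ring

lemma norm_term_eq {a : ℕ} (s : ℂ) (p : ℕ × ℕ) :
    ‖if p.2 < p.1 ∧ 0 < p.2 then ((p.2:ℂ))^((a:ℕ):ℂ) * (p.1:ℂ)^(-s) else 0‖
      = if p.2 < p.1 ∧ 0 < p.2 then (p.2:ℝ)^a * (p.1:ℝ)^(-s.re) else 0 := by
  split_ifs with h
  · rw [norm_mul, cpow_natCast, norm_pow, norm_natCast,
      norm_natCast_cpow_of_pos (lt_trans h.2 h.1), neg_re]
  · exact norm_zero

lemma summable_norm_term {a : ℕ} {s : ℂ} (hs : (a:ℝ)+2 < s.re) :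
    Summable (fun p : ℕ × ℕ =>
      if p.2 < p.1 ∧ 0 < p.2 then (p.2:ℝ)^a * (p.1:ℝ)^(-s.re) else 0) := by
  have hnn : ∀ p : ℕ × ℕ, 0 ≤ (if p.2 < p.1 ∧ 0 < p.2 then (p.2:ℝ)^a * (p.1:ℝ)^(-s.re) else 0) := by
    intro p; split_ifs
    · positivity
    · exact le_refl 0
  rw [summable_prod_of_nonneg hnn]
  refine ⟨?_, ?_⟩
  · intro n
    apply summable_of_ne_finset_zero (s := Finset.range n)
    intro m hm
    simp only [Finset.mem_range, not_lt] at hm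
    rw [if_neg]; omega
  · -- bound each inner tsum
    have hb : ∀ n : ℕ, (∑' m, if m < n ∧ 0 < m then (m:ℝ)^a * (n:ℝ)^(-s.re) else 0)
        ≤ (n:ℝ)^((a:ℝ)+1-s.re) := by
      intro n
      rw [tsum_eq_sum (s := Finset.range n) (by intro m hm; rw [if_neg]; simp at hm; omega)]
      calc ∑ m ∈ Finset.range n, (if m < n ∧ 0 < m then (m:ℝ)^a * (n:ℝ)^(-s.re) else 0)
          ≤ ∑ m ∈ Finset.range n, (n:ℝ)^a * (n:ℝ)^(-s.re) := by
            apply Finset.sum_le_sum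
            intro m hm
            split_ifs with h
            · apply mul_le_mul_of_nonneg_right _ (Real.rpow_nonneg (Nat.cast_nonneg n) _)
              exact pow_le_pow_left₀ (Nat.cast_nonneg m) (by exact_mod_cast h.1.le) a
            · positivity
        _ ≤ (n:ℝ)^((a:ℝ)+1-s.re) := by
            rw [Finset.sum_const, Finset.card_range, nsmul_eq_mul]
            rcases Nat.eq_zero_or_pos n with rfl | hn
            · simp
              positivity
            · have hn' : (0:ℝ) < n := by exact_mod_cast hn
              rw [← Real.rpow_natCast (n:ℝ) a]
              nth_rewrite 1 [← Real.rpow_one (n:ℝ)]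
              rw [← Real.rpow_add hn', ← Real.rpow_add hn']
              apply le_of_eq
              congr 1
              ring
    apply Summable.of_nonneg_of_le (fun n => tsum_nonneg (fun m => hnn (n, m))) hb
    exact Real.summable_nat_rpow.mpr (by linarith)

lemma summable_term {a : ℕ} {s : ℂ} (hs : (a:ℝ)+2 < s.re) :
    Summable (fun p : ℕ × ℕ =>
      if p.2 < p.1 ∧ 0 < p.2 then ((p.2:ℂ))^((a:ℕ):ℂ) * (p.1:ℂ)^(-s) else 0) := by
  apply Summable.of_norm
  simp only [norm_term_eq]
  exact summable_norm_term hs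

lemma re_sub_nat_gt {a i : ℕ} {s : ℂ} (hs : (a:ℝ)+2 < s.re) (hi : i ≤ a + 1) :
    1 < (s - ((a+1-i : ℕ):ℂ)).re := by
  have h2 : ((a+1-i:ℕ):ℝ) ≤ ((a+1:ℕ):ℝ) := Nat.cast_le.mpr (Nat.sub_le _ _)
  simp only [sub_re, natCast_re]
  push_cast at h2 ⊢
  linarith

lemma mzSeries_formula {a : ℕ} (ha : 1 ≤ a) {s : ℂ} (hs : (a:ℝ)+2 < s.re) :
    mzSeries [-(a:ℂ), s]
      = ∑ i ∈ Finset.range (a+1), coefC a i * riemannZeta (s - ((a+1-i : ℕ):ℂ)) := by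
  have hs0 : (1:ℝ) < s.re := by have : (0:ℝ) ≤ a := Nat.cast_nonneg a; linarith
  rw [mzSeries_two]
  have hnn : -(-(a:ℂ)) = ((a:ℕ):ℂ) := by ring_nf
  simp only [hnn]
  rw [(summable_term hs).tsum_prod' (fun n => (summable_term hs).prod_factor n)]
  -- inner sums
  have inner : ∀ n : ℕ,
      (∑' m, if m < n ∧ 0 < m then ((m:ℂ))^((a:ℕ):ℂ) * (n:ℂ)^(-s) else 0)
        = ∑ i ∈ Finset.range (a+1), coefC a i * ((n:ℂ)^(a+1-i) * (n:ℂ)^(-s)) := by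
    intro n
    rw [tsum_eq_sum (s := Finset.range n)
      (by intro m hm; rw [if_neg]; simp at hm; omega)]
    have : ∀ m ∈ Finset.range n,
        (if m < n ∧ 0 < m then ((m:ℂ))^((a:ℕ):ℂ) * (n:ℂ)^(-s) else 0)
          = (m:ℂ)^a * (n:ℂ)^(-s) := by
      intro m hm
      simp only [Finset.mem_range] at hm
      rcases Nat.eq_zero_or_pos m with rfl | hmp
      · rw [if_neg (by omega)]
        norm_num [zero_pow (by omega : a ≠ 0)]
      · rw [if_pos ⟨hm, hmp⟩, cpow_natCast]
    rw [Finset.sum_congr rfl this, ← Finset.sum_mul, faulhaberC a n, Finset.sum_mul]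
    exact Finset.sum_congr rfl fun i hi => by ring
  simp only [inner]
  -- rewrite each power as 1 / n ^ (s - p)
  have hterm : ∀ i ∈ Finset.range (a+1), ∀ n : ℕ,
      (n:ℂ)^(a+1-i) * (n:ℂ)^(-s) = 1/(n:ℂ)^(s - ((a+1-i : ℕ):ℂ)) := by
    intro i hi n
    simp only [Finset.mem_range] at hi
    rcases Nat.eq_zero_or_pos n with rfl | hn
    · have h1 : -s ≠ 0 := by
        intro h
        have : s = 0 := by simpa [neg_eq_zero] using h
        rw [this] at hs0; simp at hs0; linarith
      have h2 : s - ((a+1-i : ℕ):ℂ) ≠ 0 := by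
        intro h
        have := re_sub_nat_gt hs (by omega : i ≤ a+1)
        rw [h] at this; simp at this; linarith
      simp only [Nat.cast_zero]
      rw [zero_pow (by omega : a+1-i ≠ 0), zero_cpow h1, zero_cpow h2]
      simp
    · have hne : (n:ℂ) ≠ 0 := Nat.cast_ne_zero.mpr (by omega)
      rw [← cpow_natCast (n:ℂ) (a+1-i), ← cpow_add _ _ hne, one_div, ← cpow_neg]
      congr 1
      ring
  have : ∀ n : ℕ, ∑ i ∈ Finset.range (a+1), coefC a i * ((n:ℂ)^(a+1-i) * (n:ℂ)^(-s))
      = ∑ i ∈ Finset.range (a+1), coefC a i * (1/(n:ℂ)^(s - ((a+1-i : ℕ):ℂ))) := by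
    intro n
    exact Finset.sum_congr rfl fun i hi => by rw [hterm i hi n]
  simp only [this]
  rw [Summable.tsum_finsetSum (fun i hi => ?_)]
  · refine Finset.sum_congr rfl fun i hi => ?_
    rw [tsum_mul_left]
    congr 1
    exact (zeta_eq_tsum_one_div_nat_cpow
      (re_sub_nat_gt hs (by simp at hi; omega))).symm
  · exact ((Complex.summable_one_div_nat_cpow.mpr
      (re_sub_nat_gt hs (by simp at hi; omega)))).mul_left _

lemma lastSum_two_one (c₁ c₂ : ℂ) : lastSum [c₁, c₂] 1 = c₂ := by simp [lastSum]
lemma lastSum_two_two (c₁ c₂ : ℂ) : lastSum [c₁, c₂] 2 = c₁ + c₂ := by simp [lastSum]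

lemma convDom_two {c₁ c₂ : ℂ} (h1 : 1 < c₂.re) (h2 : 2 < (c₁+c₂).re) : convDom [c₁, c₂] := by
  intro k hk1 hk2
  simp only [List.length_cons, List.length_nil] at hk2
  interval_cases k
  · rw [lastSum_two_one]; exact_mod_cast h1
  · rw [lastSum_two_two]; exact_mod_cast h2

lemma MZRegular_two {c₁ c₂ : ℂ} (h1 : c₂ ≠ 1)
    (h2 : ¬(c₁+c₂ = 2 ∨ c₁+c₂ = 1 ∨ c₁+c₂ = 0 ∨ ∃ m : ℕ, c₁+c₂ = -(2*((m:ℂ)+1)))) :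
    MZRegular [c₁, c₂] := by
  refine ⟨fun _ => by rwa [lastSum_two_one], fun _ => by rwa [lastSum_two_two], ?_⟩
  intro k hk3 hk2
  simp only [List.length_cons, List.length_nil] at hk2
  omega

lemma key (Z : List ℂ → ℂ) (hZ : IsMZFFamily Z) (a b : ℕ) (ha : 1 ≤ a) (hb : 1 ≤ b)
    (hab : Odd (a + b)) :
    Z [-(a:ℂ), -(b:ℂ)] = -(1/2) * riemannZeta (-((a+b:ℕ):ℂ)) := by
  classical
  set h : ℂ → ℂ :=
    fun s => ∑ i ∈ Finset.range (a+1), coefC a i * riemannZeta (s - ((a+1-i : ℕ):ℂ)) with hh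
  set S : Set ℤ :=
    {m : ℤ | m = 1 ∨ (2 ≤ m ∧ m ≤ (a:ℤ)+2) ∨ (m ≤ (a:ℤ) ∧ Even ((a:ℤ) - m))} with hS
  set B : Set ℂ := (fun m : ℤ => (m:ℂ)) '' S with hB
  have hBclosed : IsClosed B :=
    Complex.closedEmbedding_intCast.isClosedMap _ (isClosed_discrete S)
  have hWopen : IsOpen Bᶜ := hBclosed.isOpen_compl
  have hWconn : IsPreconnected Bᶜ := by
    have hrank : (1:Cardinal) < Module.rank ℝ ℂ := by rw [rank_real_complex]; norm_num
    exact (Set.Countable.isPathConnected_compl_of_one_lt_rank hrank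
      (S.to_countable.image _)).isConnected.isPreconnected
  have hW : ∀ s : ℂ, s ∈ Bᶜ → ∀ m : ℤ, m ∈ S → s ≠ (m:ℂ) := by
    intro s hs m hm heq
    exact hs ⟨m, hm, heq.symm⟩
  -- W is inside the regular set
  have hreg : ∀ s ∈ Bᶜ, MZRegular [-(a:ℂ), s] := by
    intro s hs
    apply MZRegular_two
    · have := hW s hs 1 (Or.inl rfl)
      simpa using this
    · rintro (hc | hc | hc | ⟨m, hc⟩)
      · refine hW s hs ((a:ℤ)+2) (Or.inr (Or.inl ⟨by omega, le_refl _⟩)) ?_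
        push_cast
        linear_combination hc
      · refine hW s hs ((a:ℤ)+1) (Or.inr (Or.inl ⟨by omega, by omega⟩)) ?_
        push_cast
        linear_combination hc
      · refine hW s hs (a:ℤ) (Or.inr (Or.inr ⟨le_refl _, by simp⟩)) ?_
        push_cast
        linear_combination hc
      · refine hW s hs ((a:ℤ) - 2*((m:ℤ)+1)) (Or.inr (Or.inr ⟨by omega, ⟨m+1, by ring⟩⟩)) ?_
        push_cast
        linear_combination hc
  -- Z-slice is analytic on W
  have hg : AnalyticOnNhd ℂ (fun s : ℂ => Z [-(a:ℂ), s]) Bᶜ := by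
    have h2 := hZ.analytic 2
    set F : Fin 2 → ℂ → ℂ := ![(fun _ : ℂ => -(a:ℂ)), fun z : ℂ => z] with hF
    have hfun : ∀ s : ℂ, List.ofFn (fun i : Fin 2 => F i s) = [-(a:ℂ), s] := by
      intro s; simp [hF, List.ofFn_succ]
    have hι : AnalyticOnNhd ℂ (fun s : ℂ => (fun i : Fin 2 => F i s)) Bᶜ := by
      intro s hs
      apply AnalyticAt.pi
      intro i
      fin_cases i
      · simpa [hF] using (analyticAt_const : AnalyticAt ℂ (fun _ : ℂ => -(a:ℂ)) s)
      · exact analyticAt_id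
    have hmaps : Set.MapsTo (fun s : ℂ => (fun i : Fin 2 => F i s)) Bᶜ
        {v : Fin 2 → ℂ | MZRegular (List.ofFn v)} := by
      intro s hs
      simp only [Set.mem_setOf_eq, hfun]
      exact hreg s hs
    have hcomp := h2.comp hι hmaps
    have : ((fun v : Fin 2 → ℂ => Z (List.ofFn v)) ∘ (fun s : ℂ => (fun i : Fin 2 => F i s)))
        = fun s : ℂ => Z [-(a:ℂ), s] := by
      funext s
      simp only [Function.comp_apply, hfun]
    rwa [this] at hcomp
  -- h is analytic on W
  have hζ : AnalyticOnNhd ℂ riemannZeta {s : ℂ | s ≠ 1} :=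
    DifferentiableOn.analyticOnNhd
      (fun s hs => (differentiableAt_riemannZeta hs).differentiableWithinAt) isOpen_ne
  have hh_an : AnalyticOnNhd ℂ h Bᶜ := by
    intro s hs
    rw [hh]
    apply Finset.analyticAt_fun_sum
    intro i hi
    simp only [Finset.mem_range] at hi
    apply AnalyticAt.mul analyticAt_const
    have hne : s - ((a+1-i : ℕ):ℂ) ≠ 1 := by
      intro hcon
      refine hW s hs ((a:ℤ)+2-(i:ℤ)) (Or.inr (Or.inl ⟨by omega, by omega⟩)) ?_
      have hcast : ((a+1-i:ℕ):ℂ) = (a:ℂ)+1-(i:ℂ) := by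
        push_cast [Nat.cast_sub (by omega : i ≤ a+1)]
        ring
      rw [hcast] at hcon
      push_cast
      linear_combination hcon
    exact AnalyticAt.comp (hζ _ hne) (analyticAt_id.sub analyticAt_const)
  -- equality on the half-plane
  have hopen : IsOpen {s : ℂ | (a:ℝ)+2 < s.re} := isOpen_lt continuous_const continuous_re
  have heqP : ∀ s ∈ {s : ℂ | (a:ℝ)+2 < s.re}, Z [-(a:ℂ), s] = h s := by
    intro s hs
    simp only [Set.mem_setOf_eq] at hs
    have h1 : 1 < s.re := by
      have : (0:ℝ) ≤ a := Nat.cast_nonneg a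
      linarith
    have h2 : 2 < ((-(a:ℂ))+s).re := by
      simp only [add_re, neg_re, natCast_re]
      linarith
    rw [hZ.series_eq _ (convDom_two h1 h2), mzSeries_formula ha hs]
  have hx0mem : ((a:ℂ)+3) ∈ {s : ℂ | (a:ℝ)+2 < s.re} := by
    simp only [Set.mem_setOf_eq, add_re, natCast_re]
    norm_num
  have hev : (fun s : ℂ => Z [-(a:ℂ), s]) =ᶠ[nhds ((a:ℂ)+3)] h :=
    Filter.eventuallyEq_of_mem (hopen.mem_nhds hx0mem) heqP
  have hx0W : ((a:ℂ)+3) ∈ Bᶜ := by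
    intro hmem
    obtain ⟨m, hmS, hmc⟩ := hmem
    have hm : m = (a:ℤ)+3 := by
      have : (m:ℂ) = (((a:ℤ)+3 : ℤ):ℂ) := by push_cast; exact hmc
      exact_mod_cast this
    rcases hmS with hc | ⟨hc1, hc2⟩ | ⟨hc1, hc2⟩ <;> omega
  have hEq := AnalyticOnNhd.eqOn_of_preconnected_of_eventuallyEq hg hh_an hWconn hx0W hev
  have hbW : (-(b:ℂ)) ∈ Bᶜ := by
    intro hmem
    obtain ⟨m, hmS, hmc⟩ := hmem
    have hm : m = -(b:ℤ) := by
      have : (m:ℂ) = ((-(b:ℤ) : ℤ):ℂ) := by push_cast; exact hmc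
      exact_mod_cast this
    obtain ⟨u, hu⟩ := hab
    rcases hmS with hc | ⟨hc1, hc2⟩ | ⟨hc1, ⟨t, ht⟩⟩ <;> omega
  have hvb : Z [-(a:ℂ), -(b:ℂ)] = h (-(b:ℂ)) := hEq hbW
  rw [hvb, hh]
  beta_reduce
  -- evaluate the sum: only i = 1 survives
  rw [Finset.sum_eq_single 1]
  · have hc1 : coefC a 1 = -(1/2) := by
      have hrat : (bernoulli 1 * (((a+1).choose 1 : ℕ) : ℚ) / ((a:ℚ)+1) : ℚ) = -(1/2) := by
        rw [bernoulli_one, Nat.choose_one_right]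
        have hne : ((a:ℚ)+1) ≠ 0 := by positivity
        push_cast
        field_simp
      rw [coefC, hrat]
      norm_num
    rw [hc1]
    have : -(b:ℂ) - ((a+1-1 : ℕ):ℂ) = -((a+b:ℕ):ℂ) := by
      simp only [Nat.add_sub_cancel]
      push_cast
      ring
    rw [this]
  · intro i hi hne
    simp only [Finset.mem_range] at hi
    rcases Nat.even_or_odd i with he | ho
    · obtain ⟨u, hu⟩ := hab
      obtain ⟨t, ht⟩ := he
      have hk : ∃ k : ℕ, b + (a+1-i) = 2*(k+1) := ⟨(b + (a+1-i))/2 - 1, by omega⟩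
      obtain ⟨k, hk⟩ := hk
      have harg : -(b:ℂ) - ((a+1-i:ℕ):ℂ) = -2*((k:ℂ)+1) := by
        have hcst : ((b + (a+1-i) : ℕ):ℂ) = ((2*(k+1) : ℕ):ℂ) := by rw [hk]
        push_cast at hcst
        linear_combination -hcst
      rw [harg, riemannZeta_neg_two_mul_nat_add_one, mul_zero]
    · have h1i : 1 < i := by
        obtain ⟨t, ht⟩ := ho
        omega
      have hbz : bernoulli i = 0 := by
        rw [bernoulli_eq_bernoulli'_of_ne_one (by omega)]
        exact bernoulli'_eq_zero_of_odd ho h1i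
      simp [coefC, hbz]
  · intro hmem
    exact absurd (Finset.mem_range.mpr (by omega)) hmem

/-- for integers n₁, n₂ ≤ 0 with n₁n₂ ≠ 0 and n₁+n₂ a negative odd
integer (so (n₁,n₂) is a regular point of ζ₂),
ζ₂(n₁,n₂) = -(1/2) ζ(n₁+n₂) = B_{-n₁-n₂+1}/(2(-n₁-n₂+1)). -/
theorem zeta2_nonpos_nonpos (Z : List ℂ → ℂ) (hZ : IsMZFFamily Z)
    (n₁ n₂ : ℤ) (h1 : n₁ ≤ 0) (h2 : n₂ ≤ 0) (h0 : n₁ * n₂ ≠ 0)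
    (hreg : n₁ + n₂ < 0 ∧ Odd (n₁ + n₂)) :
    Z [(n₁ : ℂ), (n₂ : ℂ)] = -(1 / 2) * zetaInt (n₁ + n₂) ∧
    -(1 / 2 : ℂ) * zetaInt (n₁ + n₂) =
      ((bernoulli ((-n₁ - n₂ + 1).toNat) : ℚ) : ℂ) / (2 * ((-n₁ - n₂ + 1 : ℤ) : ℂ)) := by
  obtain ⟨hneg, hodd⟩ := hreg
  have hn1 : n₁ < 0 := by
    rcases lt_or_eq_of_le h1 with hx | hx
    · exact hx
    · exact absurd (mul_eq_zero_of_left hx n₂) h0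
  have hn2 : n₂ < 0 := by
    rcases lt_or_eq_of_le h2 with hx | hx
    · exact hx
    · exact absurd (mul_eq_zero_of_right n₁ hx) h0
  set a := (-n₁).toNat with haa
  set b := (-n₂).toNat with hbb
  have haz : ((a:ℕ):ℤ) = -n₁ := Int.toNat_of_nonneg (by omega)
  have hbz : ((b:ℕ):ℤ) = -n₂ := Int.toNat_of_nonneg (by omega)
  have ha : 1 ≤ a := by omega
  have hb : 1 ≤ b := by omega
  have hqz : ((a+b:ℕ):ℤ) = -(n₁+n₂) := by push_cast; omega
  have hq : Odd (a+b) := by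
    rw [← Int.odd_coe_nat, hqz]
    exact hodd.neg
  have hc1 : (n₁:ℂ) = -(a:ℂ) := by
    have hx : ((a:ℕ):ℂ) = ((-n₁ : ℤ):ℂ) := by exact_mod_cast congrArg (fun z : ℤ => (z:ℂ)) haz
    push_cast at hx
    linear_combination hx
  have hc2 : (n₂:ℂ) = -(b:ℂ) := by
    have hx : ((b:ℕ):ℂ) = ((-n₂ : ℤ):ℂ) := by exact_mod_cast congrArg (fun z : ℤ => (z:ℂ)) hbz
    push_cast at hx
    linear_combination hx
  have hzc : ((n₁+n₂ : ℤ):ℂ) = -((a+b : ℕ):ℂ) := by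
    have hx := congrArg (fun z : ℤ => (z:ℂ)) hqz
    push_cast at hx ⊢
    linear_combination hx
  constructor
  · rw [hc1, hc2, zetaInt, hzc]
    exact key Z hZ a b ha hb hq
  · rw [zetaInt, hzc, riemannZeta_neg_nat_eq_bernoulli]
    have htn : (-n₁ - n₂ + 1).toNat = (a+b)+1 := by
      have hy : (-n₁ - n₂ + 1 : ℤ) = ((a+b+1 : ℕ) : ℤ) := by push_cast; omega
      rw [hy, Int.toNat_natCast]
    rw [htn]
    have hm1 : (-1:ℂ)^(a+b) = -1 := hq.neg_one_pow
    rw [hm1]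
    have hcst : ((-n₁-n₂+1 : ℤ):ℂ) = ((a+b:ℕ):ℂ)+1 := by
      have hx := congrArg (fun z : ℤ => (z:ℂ)) hqz
      push_cast at hx ⊢
      linear_combination -hx
    rw [hcst]
    have hne : ((a+b:ℕ):ℂ)+1 ≠ 0 := by
      have hy : ((a+b:ℕ):ℂ)+1 = ((a+b+1:ℕ):ℂ) := by push_cast; ring
      rw [hy]
      exact Nat.cast_ne_zero.mpr (by omega)
    field_simp
end
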